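/- (Kronecker) Let α be a nonzero algebraic number. Then the absolute logarithmic Weil height h(α) = 0 if and only if α is a root of unity. -/

import Mathlib

open IntermediateField in
/-- The absolute logarithmic Weil height of an algebraic number `α`:
`h(α) = (log |a_d| + ∑_σ log⁺ |σ α|) / d`, where `d = [ℚ(α) : ℚ]`, `σ` runs
over the embeddings of `ℚ(α)` into `ℂ`, and `a_d` is the leading coefficient
of the primitive integral minimal polynomial of `α`. -/
noncomputable def weilHeight (α : AlgebraicClosure ℚ) : ℝ :=
  haveI : FiniteDimensional ℚ ℚ⟮α⟯ :=
    IntermediateField.adjoin.finiteDimensional ((AlgebraicClosure.isAlgebraic ℚ).isAlgebraic α).isIntegral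
  haveI : NumberField ℚ⟮α⟯ := ⟨⟩
  (Real.log
      (((IsLocalization.integerNormalization (nonZeroDivisors ℤ)
          (minpoly ℚ α)).primPart.leadingCoeff.natAbs : ℝ)) +
    ∑ σ : ℚ⟮α⟯ →+* ℂ,
      max 0 (Real.log ‖σ (IntermediateField.AdjoinSimple.gen ℚ α)‖)) /
    (minpoly ℚ α).natDegree

open Polynomial IntermediateField in
/-- Kronecker's theorem: a nonzero algebraic number has Weil height zero if
and only if it is a root of unity. -/
theorem stmt17 (α : AlgebraicClosure ℚ) (hα : α ≠ 0) :
    weilHeight α = 0 ↔ ∃ n : ℕ, 1 ≤ n ∧ α ^ n = 1 := by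
  classical
  haveI : FiniteDimensional ℚ ℚ⟮α⟯ :=
    IntermediateField.adjoin.finiteDimensional ((AlgebraicClosure.isAlgebraic ℚ).isAlgebraic α).isIntegral
  haveI : NumberField ℚ⟮α⟯ := ⟨⟩
  set x := IntermediateField.AdjoinSimple.gen ℚ α with hxdef
  have hmapx : algebraMap ℚ⟮α⟯ (AlgebraicClosure ℚ) x = α := IntermediateField.AdjoinSimple.algebraMap_gen ℚ α
  have hxne : x ≠ 0 := by
    intro h; apply hα; rw [← hmapx, h, map_zero]
  have hαint : IsIntegral ℚ α := ((AlgebraicClosure.isAlgebraic ℚ).isAlgebraic α).isIntegral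
  set p := minpoly ℚ α with hpdef
  have hpne : p ≠ 0 := minpoly.ne_zero hαint
  have hd : 0 < p.natDegree := minpoly.natDegree_pos hαint
  set N := IsLocalization.integerNormalization (nonZeroDivisors ℤ) p with hNdef
  obtain ⟨b, hb⟩ := IsLocalization.integerNormalization_map_to_map (nonZeroDivisors ℤ) p
  rw [← hNdef] at hb
  have hbne : (b : ℤ) ≠ 0 := nonZeroDivisors.coe_ne_zero b
  set Q := N.primPart with hQdef
  have hQne : Q ≠ 0 := N.primPart_ne_zero
  have hQlcne : Q.leadingCoeff.natAbs ≠ 0 := fun h =>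
    hQne (leadingCoeff_eq_zero.mp (Int.natAbs_eq_zero.mp h))
  have h1le : (1 : ℝ) ≤ (Q.leadingCoeff.natAbs : ℝ) := by
    exact_mod_cast Nat.one_le_iff_ne_zero.mpr hQlcne
  have hNne : N ≠ 0 := by
    intro h
    apply smul_ne_zero hbne hpne
    rw [← hb, h, Polynomial.map_zero]
  have hNcont : N.content ≠ 0 := fun h => hNne (content_eq_zero_iff.mp h)
  -- `α` is a root of `Q`
  have haevalQ : Polynomial.aeval α Q = 0 := by
    have hN0 : Polynomial.aeval α N = 0 := by
      have : Polynomial.aeval α (N.map (algebraMap ℤ ℚ)) = 0 := by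
        rw [hb, ← algebraMap_smul ℚ ((b : ℤ)) p, map_smul, hpdef, minpoly.aeval, smul_zero]
      rwa [Polynomial.aeval_map_algebraMap] at this
    have := congrArg (Polynomial.aeval α) N.eq_C_content_mul_primPart
    rw [hN0, map_mul, Polynomial.aeval_C] at this
    have hcontL : (algebraMap ℤ (AlgebraicClosure ℚ)) N.content ≠ 0 := by
      simpa using hNcont
    exact ((mul_eq_zero.mp this.symm).resolve_left hcontL)
  -- integrality characterization
  have claimA : Q.leadingCoeff.natAbs = 1 → IsIntegral ℤ α := by
    intro h1
    rcases Int.natAbs_eq_iff.mp h1 with h | h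
    · exact ⟨Q, h, by rwa [← Polynomial.aeval_def]⟩
    · refine ⟨-Q, ?_, ?_⟩
      · rw [Monic, leadingCoeff_neg, h]; norm_num
      · rw [← Polynomial.aeval_def, map_neg, haevalQ, neg_zero]
  have claimB : IsIntegral ℤ α → Q.leadingCoeff.natAbs = 1 := by
    intro hint
    have hmono : (minpoly ℤ α).Monic := minpoly.monic hint
    have h_eq : p = (minpoly ℤ α).map (algebraMap ℤ ℚ) :=
      minpoly.isIntegrallyClosed_eq_field_fractions' ℚ hint
    have hNmul : N = C (b : ℤ) * minpoly ℤ α := by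
      apply Polynomial.map_injective (algebraMap ℤ ℚ) (fun a b h => by exact_mod_cast h)
      rw [hb, h_eq, Polynomial.map_mul, Polynomial.map_C]
      rw [← algebraMap_smul ℚ (b : ℤ), smul_eq_C_mul]
    have hcont : N.content = normalize (b : ℤ) := by
      rw [hNmul, content_C_mul, hmono.isPrimitive.content_eq_one, mul_one]
    have hlcN : N.leadingCoeff = (b : ℤ) := by
      rw [hNmul, leadingCoeff_mul, leadingCoeff_C, hmono.leadingCoeff, mul_one]
    have hlc2 : N.leadingCoeff = N.content * Q.leadingCoeff := by
      conv_lhs => rw [N.eq_C_content_mul_primPart]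
      rw [leadingCoeff_mul, leadingCoeff_C]
    have key : (b : ℤ) = |(b : ℤ)| * Q.leadingCoeff := by
      have h1 := hlcN.symm.trans hlc2
      rwa [hcont, ← Int.abs_eq_normalize] at h1
    have : (b : ℤ).natAbs = (b : ℤ).natAbs * Q.leadingCoeff.natAbs := by
      conv_lhs => rw [key]
      rw [Int.natAbs_mul, Int.natAbs_abs]
    have hbnat : (b : ℤ).natAbs ≠ 0 := Int.natAbs_ne_zero.mpr hbne
    nth_rewrite 1 [← Nat.mul_one (b : ℤ).natAbs] at this
    exact (Nat.eq_of_mul_eq_mul_left (Nat.pos_of_ne_zero hbnat) this).symm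
  rw [weilHeight]
  constructor
  · intro h
    rw [_root_.div_eq_zero_iff] at h
    have hdR : ((p.natDegree : ℝ)) ≠ 0 := by positivity
    have hsum := h.resolve_right hdR
    have hA : (0 : ℝ) ≤ Real.log ((Q.leadingCoeff.natAbs : ℝ)) := Real.log_nonneg h1le
    have hSnn : ∀ σ ∈ (Finset.univ : Finset (ℚ⟮α⟯ →+* ℂ)), (0:ℝ) ≤
        max 0 (Real.log (‖σ x‖)) := fun σ _ => le_max_left 0 _
    have hS : (0 : ℝ) ≤ ∑ σ : ℚ⟮α⟯ →+* ℂ, max 0 (Real.log (‖σ x‖)) :=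
      Finset.sum_nonneg hSnn
    have hA0 : Real.log ((Q.leadingCoeff.natAbs : ℝ)) = 0 := by linarith
    have hS0 : ∑ σ : ℚ⟮α⟯ →+* ℂ, max 0 (Real.log (‖σ x‖)) = 0 := by linarith
    -- leading coefficient is ±1
    have hlc1 : Q.leadingCoeff.natAbs = 1 := by
      rcases Real.log_eq_zero.mp hA0 with h | h | h
      · exact absurd h (by positivity)
      · exact_mod_cast h
      · exfalso; linarith
    have hint : IsIntegral ℤ α := claimA hlc1
    have hxint : IsIntegral ℤ x := by
      rw [← isIntegral_algebraMap_iff (algebraMap ℚ⟮α⟯ (AlgebraicClosure ℚ)).injective, hmapx]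
      exact hint
    -- each conjugate has absolute value at most 1
    have hle1 : ∀ σ : ℚ⟮α⟯ →+* ℂ, ‖σ x‖ ≤ 1 := by
      intro σ
      have := (Finset.sum_eq_zero_iff_of_nonneg hSnn).mp hS0 σ (Finset.mem_univ σ)
      have hlog : Real.log (‖σ x‖) ≤ 0 := by
        by_contra hc
        push_neg at hc
        rw [max_eq_right hc.le] at this
        linarith
      have hpos : 0 < ‖σ x‖ := by
        simpa using (map_ne_zero σ).mpr hxne
      exact (Real.log_nonpos_iff hpos.le).mp hlog
    -- the product of conjugates' absolute values is at least 1
    have hnormne : Algebra.norm ℚ x ≠ 0 := by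
      rw [Algebra.norm_ne_zero_iff]; exact hxne
    have hnormint : IsIntegral ℤ (Algebra.norm ℚ x) := Algebra.isIntegral_norm ℚ hxint
    obtain ⟨z, hz⟩ := IsIntegrallyClosed.isIntegral_iff.mp hnormint
    have hzne : z ≠ 0 := by
      intro h; apply hnormne; rw [← hz, h, map_zero]
    have hprod : ∏ σ : ℚ⟮α⟯ →+* ℂ, ‖σ x‖ = |((Algebra.norm ℚ x : ℚ) : ℝ)| := by
      have := congrArg (‖·‖)
        (Algebra.norm_eq_prod_embeddings ℚ ℂ (x : ℚ⟮α⟯))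
      rw [norm_prod] at this
      have he : ∏ σ : ℚ⟮α⟯ →+* ℂ, ‖σ x‖ = ∏ τ : ℚ⟮α⟯ →ₐ[ℚ] ℂ, ‖τ x‖ :=
        Fintype.prod_equiv (RingHom.equivRatAlgHom _ _) _ _ fun _ => by
          simp [RingHom.equivRatAlgHom_apply]
      rw [he, ← this, eq_ratCast, Complex.norm_ratCast]
    have hone_le : (1 : ℝ) ≤ ∏ σ : ℚ⟮α⟯ →+* ℂ, ‖σ x‖ := by
      rw [hprod, ← hz]
      have : (1 : ℝ) ≤ |(z : ℝ)| := by
        rw [← Int.cast_abs]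
        exact_mod_cast Int.one_le_abs (by exact_mod_cast hzne)
      simpa using this
    -- hence each conjugate has absolute value exactly 1
    have heq1 : ∀ σ : ℚ⟮α⟯ →+* ℂ, ‖σ x‖ = 1 := by
      intro σ
      refine le_antisymm (hle1 σ) ?_
      have hsplit := (Finset.mul_prod_erase Finset.univ (fun τ : ℚ⟮α⟯ →+* ℂ =>
        ‖τ x‖) (Finset.mem_univ σ)).symm
      have hrest : ∏ τ ∈ Finset.univ.erase σ, ‖τ x‖ ≤ 1 :=
        Finset.prod_le_one (fun τ _ => (norm_nonneg _)) (fun τ _ => hle1 τ)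
      have hrest0 : 0 ≤ ∏ τ ∈ Finset.univ.erase σ, ‖τ x‖ :=
        Finset.prod_nonneg (fun τ _ => norm_nonneg _)
      nlinarith [hone_le, norm_nonneg (σ x)]
    obtain ⟨n, hn, hxn⟩ := NumberField.Embeddings.pow_eq_one_of_norm_eq_one ℚ⟮α⟯ ℂ hxint
      (fun φ => by exact heq1 φ)
    refine ⟨n, hn, ?_⟩
    rw [← hmapx, ← map_pow, hxn, map_one]
  · rintro ⟨n, hn, hαn⟩
    have hnne : n ≠ 0 := by omega
    have hint : IsIntegral ℤ α :=
      ⟨X ^ n - 1, monic_X_pow_sub_C 1 hnne, by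
        simp [Polynomial.eval₂_sub, Polynomial.eval₂_pow, hαn]⟩
    have hxn : x ^ n = 1 := by
      apply (algebraMap ℚ⟮α⟯ (AlgebraicClosure ℚ)).injective
      rw [map_pow, hmapx, hαn, map_one]
    have habs1 : ∀ σ : ℚ⟮α⟯ →+* ℂ, ‖σ x‖ = 1 := by
      intro σ
      have h1 : ‖σ x‖ ^ n = 1 := by
        rw [← norm_pow, ← map_pow, hxn, map_one, norm_one]
      rcases lt_trichotomy (‖σ x‖) 1 with h | h | h
      · exfalso
        have := pow_lt_one₀ (norm_nonneg _) h hnne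
        rw [h1] at this; exact lt_irrefl _ this
      · exact h
      · exfalso
        have := one_lt_pow₀ h hnne
        rw [h1] at this; exact lt_irrefl _ this
    have hA : Real.log ((Q.leadingCoeff.natAbs : ℝ)) = 0 := by
      rw [claimB hint]; simp
    have hS : ∑ σ : ℚ⟮α⟯ →+* ℂ, max 0 (Real.log (‖σ x‖)) = 0 := by
      apply Finset.sum_eq_zero
      intro σ _
      rw [habs1 σ, Real.log_one, max_self]
    rw [hA, hS, add_zero, zero_div]
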